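/- Suppose m = 1 and that for each i = 1,…,n, (g₁)_{d,i} = 0 implies f_{d,i} > 0. Let c > 0 satisfy, for each i = 1,…,n: if (g₁)_{d,i} < 0 then c ≥ −f_{d,i}/(g₁)_{d,i}, and if (g₁)_{d,i} > 0 then c > −f_{d,i}/(g₁)_{d,i}. Let A := the 2×2 matrix with rows (1, 0) and (−c, 1), indexed by j, k ∈ {0, 1} (so h₀ = −(f + c·g₁) and h₁ = g₁). If, in addition, Δ(−g₁) = ∅ and g₁(0) ≥ 0, then f^A_{gp,g} = s(f,g) (as elements of ℝ ∪ {±∞}). -/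
import Mathlib


open MvPolynomial Finset

noncomputable section

/-- `Finset.filter` with classical decidability. -/
def pfilter {β : Type*} (s : Finset β) (q : β → Prop) : Finset β :=
  @Finset.filter β q (fun _ => Classical.propDecidable _) s

/-- `|α| := α₁ + ⋯ + αₙ` for a multi-index `α`. -/
def adeg {n : ℕ} (α : Fin n →₀ ℕ) : ℕ := ∑ i, α i

/-- `Ω(p) := {α : |α| ≤ d, p_α ≠ 0, α ∉ {0, ε₁, …, εₙ}}`. -/
def OmegaSet {n : ℕ} (d : ℕ) (p : MvPolynomial (Fin n) ℝ) : Finset (Fin n →₀ ℕ) :=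
  pfilter p.support (fun α => adeg α ≤ d ∧ α ≠ 0 ∧ ∀ i, α ≠ Finsupp.single i d)

/-- `Δ(p) := {α ∈ Ω(p) : p_α x^α is not a square}`. -/
def DelSet {n : ℕ} (d : ℕ) (p : MvPolynomial (Fin n) ℝ) : Finset (Fin n →₀ ℕ) :=
  pfilter (OmegaSet d p)
    (fun α => ¬ IsSquare ((monomial α (p.coeff α)) : MvPolynomial (Fin n) ℝ))

/-- Feasibility for program (lw) for `p`. -/
def LwFeas {n : ℕ} (d : ℕ) (p : MvPolynomial (Fin n) ℝ)
    (z : (Fin n →₀ ℕ) → Fin n → ℝ) : Prop :=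
  (∀ α ∈ DelSet d p, ∀ i, 0 ≤ z α i ∧ (z α i = 0 ↔ α i = 0)) ∧
  (∀ i, ∑ α ∈ DelSet d p, z α i ≤ p.coeff (Finsupp.single i d)) ∧
  (∀ α ∈ DelSet d p, adeg α = d →
    ∏ i, (z α i / (α i : ℝ)) ^ (α i) = (p.coeff α / (d : ℝ)) ^ d)

/-- The objective function `v` of program (lw). -/
def lwObj {n : ℕ} (d : ℕ) (p : MvPolynomial (Fin n) ℝ)
    (z : (Fin n →₀ ℕ) → Fin n → ℝ) : ℝ :=
  ∑ α ∈ pfilter (DelSet d p) (fun α => adeg α < d),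
    ((d : ℝ) - (adeg α : ℝ)) *
      (((p.coeff α / (d : ℝ)) ^ d * ∏ i, ((α i : ℝ) / z α i) ^ (α i)) ^
        ((1 : ℝ) / ((d : ℝ) - (adeg α : ℝ))))

/-- `ρ(p) ∈ [0,∞]`, the infimum of `v` over the feasible set (`⊤` if infeasible). -/
def lwRho {n : ℕ} (d : ℕ) (p : MvPolynomial (Fin n) ℝ) : EReal :=
  sInf ((fun z => ((lwObj d p z : ℝ) : EReal)) '' {z | LwFeas d p z})

/-- `p_gp := p(0) − ρ(p) ∈ ℝ ∪ {−∞}`. -/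
def lwGp {n : ℕ} (d : ℕ) (p : MvPolynomial (Fin n) ℝ) : EReal :=
  ((eval (0 : Fin n → ℝ) p : ℝ) : EReal) - lwRho d p

/-- `G(λ) := f − ∑ⱼ λⱼ gⱼ`. -/
def polyG {n m : ℕ} (f : MvPolynomial (Fin n) ℝ) (g : Fin m → MvPolynomial (Fin n) ℝ)
    (lam : Fin m → ℝ) : MvPolynomial (Fin n) ℝ :=
  f - ∑ j, C (lam j) * g j

/-- `s(f,g) := sup{G(λ)_gp : λ ∈ [0,∞)^m}`. -/
def sBound {n m : ℕ} (d : ℕ) (f : MvPolynomial (Fin n) ℝ)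
    (g : Fin m → MvPolynomial (Fin n) ℝ) : EReal :=
  sSup ((fun lam => lwGp d (polyG f g lam)) '' {lam : Fin m → ℝ | ∀ j, 0 ≤ lam j})


/-- `h_k := ∑_{j=0}^m a_{jk} g_j` for `gext = (g₀, g₁, …, g_m)` with `g₀ = −f`. -/
def hpoly {n m : ℕ} (gext : Fin (m+1) → MvPolynomial (Fin n) ℝ)
    (A : Fin (m+1) → Fin (m+1) → ℝ) (k : Fin (m+1)) : MvPolynomial (Fin n) ℝ :=
  ∑ j, C (A j k) * gext j

/-- `μ` extended by `μ₀ := 1`. -/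
def muExt {m : ℕ} (mu : Fin m → ℝ) : Fin (m+1) → ℝ := Fin.cons 1 mu

/-- `H(μ) := −∑_{k=0}^m μ_k h_k`. -/
def Hpoly {n m : ℕ} (gext : Fin (m+1) → MvPolynomial (Fin n) ℝ)
    (A : Fin (m+1) → Fin (m+1) → ℝ) (mu : Fin m → ℝ) : MvPolynomial (Fin n) ℝ :=
  - ∑ k, C (muExt mu k) * hpoly gext A k

/-- `H(μ)_α^+ := −∑_{j : (h_j)_α < 0} (h_j)_α μ_j`. -/
def Hplus {n m : ℕ} (gext : Fin (m+1) → MvPolynomial (Fin n) ℝ)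
    (A : Fin (m+1) → Fin (m+1) → ℝ) (mu : Fin m → ℝ) (α : Fin n →₀ ℕ) : ℝ :=
  ∑ j, if (hpoly gext A j).coeff α < 0 then -((hpoly gext A j).coeff α * muExt mu j) else 0

/-- `H(μ)_α^− := ∑_{j : (h_j)_α > 0} (h_j)_α μ_j`. -/
def Hminus {n m : ℕ} (gext : Fin (m+1) → MvPolynomial (Fin n) ℝ)
    (A : Fin (m+1) → Fin (m+1) → ℝ) (mu : Fin m → ℝ) (α : Fin n →₀ ℕ) : ℝ :=
  ∑ j, if 0 < (hpoly gext A j).coeff α then (hpoly gext A j).coeff α * muExt mu j else 0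

/-- `Δ := Δ(f) ∪ Δ(−g₁) ∪ ⋯ ∪ Δ(−g_m)` (note `−g₀ = f`). -/
def DelTot2 {n m : ℕ} (d : ℕ) (gext : Fin (m+1) → MvPolynomial (Fin n) ℝ) :
    Finset (Fin n →₀ ℕ) :=
  Finset.univ.biUnion (fun j : Fin (m+1) => DelSet d (-(gext j)))

/-- Feasibility for program (lw2). -/
def Lw2Feas {n m : ℕ} (d : ℕ) (gext : Fin (m+1) → MvPolynomial (Fin n) ℝ)
    (A : Fin (m+1) → Fin (m+1) → ℝ)
    (z : (Fin n →₀ ℕ) → Fin n → ℝ) (w : (Fin n →₀ ℕ) → ℝ) (mu : Fin m → ℝ) : Prop :=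
  (∀ j, 0 < mu j) ∧
  (∀ α ∈ DelTot2 d gext, ∀ i, 0 ≤ z α i ∧ (z α i = 0 ↔ α i = 0)) ∧
  (∀ α ∈ DelTot2 d gext, 0 < w α) ∧
  (∀ i, ∑ α ∈ DelTot2 d gext, z α i ≤ (Hpoly gext A mu).coeff (Finsupp.single i d)) ∧
  (∀ α ∈ DelTot2 d gext, adeg α = d →
    (w α / (d : ℝ)) ^ d ≤ ∏ i, (z α i / (α i : ℝ)) ^ (α i)) ∧
  (∀ α ∈ DelTot2 d gext, max (Hplus gext A mu α) (Hminus gext A mu α) ≤ w α) ∧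
  (∀ j : Fin (m+1), j ≠ 0 → 0 ≤ ∑ k, A j k * muExt mu k)

/-- The objective function `t` of program (lw2). -/
def lw2Obj {n m : ℕ} (d : ℕ) (gext : Fin (m+1) → MvPolynomial (Fin n) ℝ)
    (A : Fin (m+1) → Fin (m+1) → ℝ)
    (z : (Fin n →₀ ℕ) → Fin n → ℝ) (w : (Fin n →₀ ℕ) → ℝ) (mu : Fin m → ℝ) : ℝ :=
  (∑ j : Fin m, mu j * max (eval (0 : Fin n → ℝ) (hpoly gext A j.succ)) 0) +
  ∑ α ∈ pfilter (DelTot2 d gext) (fun α => adeg α < d),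
    ((d : ℝ) - (adeg α : ℝ)) *
      (((w α / (d : ℝ)) ^ d * ∏ i, ((α i : ℝ) / z α i) ^ (α i)) ^
        ((1 : ℝ) / ((d : ℝ) - (adeg α : ℝ))))

/-- `ρ_A ∈ [0,∞]`, the optimal value of program (lw2) (`⊤` if infeasible). -/
def rhoA {n m : ℕ} (d : ℕ) (gext : Fin (m+1) → MvPolynomial (Fin n) ℝ)
    (A : Fin (m+1) → Fin (m+1) → ℝ) : EReal :=
  sInf ((fun t : ((Fin n →₀ ℕ) → Fin n → ℝ) × ((Fin n →₀ ℕ) → ℝ) × (Fin m → ℝ) =>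
      ((lw2Obj d gext A t.1 t.2.1 t.2.2 : ℝ) : EReal)) ''
    {t | Lw2Feas d gext A t.1 t.2.1 t.2.2})

/-- `f^A_{gp,g} := −h₀(0) − ρ_A ∈ ℝ ∪ {−∞}`. -/
def fAgp {n m : ℕ} (d : ℕ) (gext : Fin (m+1) → MvPolynomial (Fin n) ℝ)
    (A : Fin (m+1) → Fin (m+1) → ℝ) : EReal :=
  ((-(eval (0 : Fin n → ℝ) (hpoly gext A 0)) : ℝ) : EReal) - rhoA d gext A


/-- Auxiliary: subtraction of an `sInf` of real values is the `sSup` of subtractions. -/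
theorem aux_key {β : Type*} (a : ℝ) (F : β → ℝ) (S : Set β) :
    (a : EReal) - sInf ((fun b => ((F b : ℝ) : EReal)) '' S) =
      sSup ((fun b => ((a - F b : ℝ) : EReal)) '' S) := by
  rcases S.eq_empty_or_nonempty with rfl | ⟨b₀, hb₀⟩
  · simp
  · apply le_antisymm
    · rw [le_sSup_iff]
      intro ub hub
      have hb0 : ((a - F b₀ : ℝ) : EReal) ≤ ub := hub ⟨b₀, hb₀, rfl⟩
      induction ub with
      | bot => exact absurd (le_bot_iff.1 hb0) (EReal.coe_ne_bot _)
      | top => exact le_top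
      | coe r =>
        have hinf : ((a - r : ℝ) : EReal) ≤ sInf ((fun b => ((F b : ℝ) : EReal)) '' S) := by
          apply le_sInf
          rintro x ⟨b, hb, rfl⟩
          have h2 : a - F b ≤ r := EReal.coe_le_coe_iff.1 (hub ⟨b, hb, rfl⟩)
          exact EReal.coe_le_coe_iff.2 (by linarith)
        calc (a : EReal) - sInf ((fun b => ((F b : ℝ) : EReal)) '' S)
            ≤ (a : EReal) - ((a - r : ℝ) : EReal) := EReal.sub_le_sub le_rfl hinf
          _ = ((r : ℝ) : EReal) := by rw [← EReal.coe_sub]; norm_num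
    · apply sSup_le
      rintro x ⟨b, hb, rfl⟩
      show ((a - F b : ℝ) : EReal) ≤ _
      rw [EReal.coe_sub]
      exact EReal.sub_le_sub le_rfl (sInf_le ⟨b, hb, rfl⟩)

theorem aux_mem_pfilter {β : Type*} {s : Finset β} {q : β → Prop} {a : β} :
    a ∈ pfilter s q ↔ a ∈ s ∧ q a :=
  @Finset.mem_filter _ _ (fun _ => Classical.propDecidable _) _ _

theorem aux_mem_DelSet {n d : ℕ} {p : MvPolynomial (Fin n) ℝ} {α : Fin n →₀ ℕ} :
    α ∈ DelSet d p ↔ (p.coeff α ≠ 0 ∧ adeg α ≤ d ∧ α ≠ 0 ∧ ∀ i, α ≠ Finsupp.single i d)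
      ∧ ¬ IsSquare ((monomial α (p.coeff α)) : MvPolynomial (Fin n) ℝ) := by
  unfold DelSet OmegaSet
  rw [aux_mem_pfilter, aux_mem_pfilter, MvPolynomial.mem_support_iff]

theorem aux_sum_two {M : Type*} [AddCommMonoid M] (F : Fin (1+1) → M) :
    ∑ k, F k = F 0 + F 1 := by
  rw [Fin.sum_univ_succ, Fin.sum_univ_one]
  rfl

theorem aux_scale_prod {n : ℕ} (α : Fin n →₀ ℕ) (z : Fin n → ℝ) (t : ℝ) :
    ∏ i, (t * z i / (α i : ℝ)) ^ (α i) = t ^ (adeg α) * ∏ i, (z i / (α i : ℝ)) ^ (α i) := by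
  rw [adeg, ← Finset.prod_pow_eq_pow_sum, ← Finset.prod_mul_distrib]
  exact Finset.prod_congr rfl fun i _ => by rw [mul_div_assoc, mul_pow]

/-- Theorem (m = 1): with `A = [[1,0],[−c,1]]`, if `Δ(−g₁) = ∅`, `g₁(0) ≥ 0` and `c > 0`
(chosen as specified from the coefficients of `f` and `g₁`), then `f^A_{gp,g} = s(f,g)`. -/
theorem stmt9 {n : ℕ} (hn : 1 ≤ n) (d : ℕ)
    (f g₁ : MvPolynomial (Fin n) ℝ)
    (hd2 : 2 ≤ d) (hde : Even d) (hdf : f.totalDegree ≤ d) (hdg : g₁.totalDegree ≤ d)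
    (hdLeast : ∀ d' : ℕ, Even d' → 2 ≤ d' → f.totalDegree ≤ d' →
      g₁.totalDegree ≤ d' → d ≤ d')
    (hcoef : ∀ i : Fin n, g₁.coeff (Finsupp.single i d) = 0 →
      0 < f.coeff (Finsupp.single i d))
    (c : ℝ) (hc : 0 < c)
    (hcneg : ∀ i : Fin n, g₁.coeff (Finsupp.single i d) < 0 →
      -(f.coeff (Finsupp.single i d)) / g₁.coeff (Finsupp.single i d) ≤ c)
    (hcpos : ∀ i : Fin n, 0 < g₁.coeff (Finsupp.single i d) →
      -(f.coeff (Finsupp.single i d)) / g₁.coeff (Finsupp.single i d) < c)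
    (gext : Fin 2 → MvPolynomial (Fin n) ℝ) (hgext : gext = ![-f, g₁])
    (hO : ∀ j, OmegaSet d (-(gext j)) = DelSet d (-(gext j)))
    (A : Fin 2 → Fin 2 → ℝ) (hA : A = ![![1, 0], ![-c, 1]])
    (hDelg : DelSet d (-g₁) = ∅) (hg0 : 0 ≤ eval (0 : Fin n → ℝ) g₁) :
    fAgp d gext A = sBound d f ![g₁] := by
  classical
  have hgext0 : gext 0 = -f := by rw [hgext]; rfl
  have hgext1 : gext 1 = g₁ := by rw [hgext]; rfl
  have hA00 : A 0 0 = 1 := by rw [hA]; rfl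
  have hA01 : A 0 1 = 0 := by rw [hA]; rfl
  have hA10 : A 1 0 = -c := by rw [hA]; rfl
  have hA11 : A 1 1 = 1 := by rw [hA]; rfl
  have hdpos : (0 : ℝ) < (d : ℝ) := by exact_mod_cast (by omega : 0 < d)
  have hdne : (d : ℝ) ≠ 0 := ne_of_gt hdpos
  -- g₁ has no coefficients outside {0, ε₁, …, εₙ}
  have hg1z : ∀ α : Fin n →₀ ℕ, α ≠ 0 → (∀ i, α ≠ Finsupp.single i d) → g₁.coeff α = 0 := by
    intro α h0 hε
    by_contra hne
    have hadeg : adeg α ≤ d := by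
      have h1 := MvPolynomial.le_totalDegree (MvPolynomial.mem_support_iff.2 hne)
      have h2 : α.sum (fun _ e => e) = adeg α := Finsupp.sum_fintype _ _ (fun _ => rfl)
      rw [h2] at h1
      omega
    have hsup : α ∈ (-g₁).support := by
      rw [MvPolynomial.support_neg]; exact MvPolynomial.mem_support_iff.2 hne
    have hmem : α ∈ OmegaSet d (-(gext 1)) := by
      rw [hgext1]; exact aux_mem_pfilter.2 ⟨hsup, hadeg, h0, hε⟩
    rw [hO 1, hgext1, hDelg] at hmem
    simp at hmem
  have hh0 : hpoly gext A 0 = -f - C c * g₁ := by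
    simp only [hpoly, aux_sum_two, hgext0, hgext1, hA00, hA10, map_one, map_neg, one_mul]
    ring
  have hh1 : hpoly gext A 1 = g₁ := by
    simp only [hpoly, aux_sum_two, hgext0, hgext1, hA01, hA11, map_zero, map_one,
      zero_mul, one_mul, zero_add]
  have hgsum : ∀ lam : Fin 1 → ℝ, polyG f ![g₁] lam = f - C (lam 0) * g₁ := by
    intro lam; simp [polyG, Fin.sum_univ_one]
  have hHpoly : ∀ mu : Fin 1 → ℝ, Hpoly gext A mu = f - C (mu 0 - c) * g₁ := by
    intro mu
    have hm0 : muExt mu 0 = 1 := rfl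
    have hm1 : muExt mu 1 = mu 0 := rfl
    simp only [Hpoly, aux_sum_two, hh0, hh1, hm0, hm1, map_one, one_mul, map_sub]
    ring
  have hDT : DelTot2 d gext = DelSet d f := by
    ext α
    simp only [DelTot2, Finset.mem_biUnion, Finset.mem_univ, true_and]
    constructor
    · rintro ⟨j, hj⟩
      rcases Fin.eq_zero_or_eq_succ j with rfl | ⟨k, rfl⟩
      · rwa [hgext0, neg_neg] at hj
      · rw [Fin.eq_zero k, (show ((0 : Fin 1).succ : Fin 2) = 1 from rfl), hgext1, hDelg] at hj
        simp at hj
    · intro h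
      exact ⟨0, by rwa [hgext0, neg_neg]⟩
  have hGc : ∀ (lam : Fin 1 → ℝ) (α : Fin n →₀ ℕ),
      (polyG f ![g₁] lam).coeff α = f.coeff α - lam 0 * g₁.coeff α := by
    intro lam α
    rw [hgsum]
    simp [MvPolynomial.coeff_sub, MvPolynomial.coeff_C_mul]
  have hGcΔ : ∀ (lam : Fin 1 → ℝ) (α : Fin n →₀ ℕ), α ≠ 0 → (∀ i, α ≠ Finsupp.single i d) →
      (polyG f ![g₁] lam).coeff α = f.coeff α := by
    intro lam α h0 hε
    rw [hGc, hg1z α h0 hε]; ring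
  have hDelG : ∀ lam : Fin 1 → ℝ, DelSet d (polyG f ![g₁] lam) = DelSet d f := by
    intro lam
    ext α
    rw [aux_mem_DelSet, aux_mem_DelSet]
    constructor
    · rintro ⟨⟨hne, hd', h0, hε⟩, hsq⟩
      rw [hGcΔ lam α h0 hε] at hne hsq
      exact ⟨⟨hne, hd', h0, hε⟩, hsq⟩
    · rintro ⟨⟨hne, hd', h0, hε⟩, hsq⟩
      rw [← hGcΔ lam α h0 hε] at hne hsq
      exact ⟨⟨hne, hd', h0, hε⟩, hsq⟩
  have hΔf : ∀ α ∈ DelSet d f, f.coeff α ≠ 0 ∧ α ≠ 0 ∧ (∀ i, α ≠ Finsupp.single i d) := by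
    intro α h
    obtain ⟨⟨h1, _, h3, h4⟩, _⟩ := aux_mem_DelSet.1 h
    exact ⟨h1, h3, h4⟩
  have hHpm : ∀ (mu : Fin 1 → ℝ) (α : Fin n →₀ ℕ), α ∈ DelSet d f →
      max (Hplus gext A mu α) (Hminus gext A mu α) = |f.coeff α| := by
    intro mu α hα
    obtain ⟨hne, h0, hε⟩ := hΔf α hα
    have hg0' : g₁.coeff α = 0 := hg1z α h0 hε
    have hc0 : (hpoly gext A 0).coeff α = -f.coeff α := by
      rw [hh0]
      simp [MvPolynomial.coeff_sub, MvPolynomial.coeff_neg, MvPolynomial.coeff_C_mul, hg0']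
    have hc1 : (hpoly gext A 1).coeff α = 0 := by rw [hh1]; exact hg0'
    have hm0 : muExt mu 0 = 1 := rfl
    simp only [Hplus, Hminus, aux_sum_two, hc0, hc1, hm0, mul_one, zero_mul,
      lt_irrefl, if_false, add_zero, lt_self_iff_false, neg_neg]
    rcases hne.lt_or_gt with h | h
    · rw [abs_of_neg h, if_neg (by linarith), if_pos (by linarith)]
      exact max_eq_right (by linarith)
    · rw [abs_of_pos h, if_pos (by linarith), if_neg (by linarith)]
      exact max_eq_left (by linarith)
  have hprodnn : ∀ (z : (Fin n →₀ ℕ) → Fin n → ℝ) (α : Fin n →₀ ℕ),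
      (∀ i, 0 ≤ z α i) → 0 ≤ ∏ i, ((α i : ℝ) / z α i) ^ (α i) :=
    fun z α hz => Finset.prod_nonneg fun i _ =>
      pow_nonneg (div_nonneg (Nat.cast_nonneg _) (hz i)) _
  have he0 : eval (0 : Fin n → ℝ) (hpoly gext A 0)
      = -(eval (0 : Fin n → ℝ) f) - c * eval (0 : Fin n → ℝ) g₁ := by
    rw [hh0]; simp
  have heG : ∀ lam : Fin 1 → ℝ, eval (0 : Fin n → ℝ) (polyG f ![g₁] lam)
      = eval (0 : Fin n → ℝ) f - lam 0 * eval (0 : Fin n → ℝ) g₁ := by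
    intro lam; rw [hgsum]; simp
  have hsucc : ((0 : Fin 1).succ : Fin 2) = 1 := rfl
  have keyGp : ∀ p : MvPolynomial (Fin n) ℝ, lwGp d p =
      sSup ((fun z => ((eval (0 : Fin n → ℝ) p - lwObj d p z : ℝ) : EReal)) ''
        {z | LwFeas d p z}) := by
    intro p
    simp only [lwGp, lwRho]
    exact aux_key _ _ _
  have keyA : fAgp d gext A =
      sSup ((fun t : ((Fin n →₀ ℕ) → Fin n → ℝ) × ((Fin n →₀ ℕ) → ℝ) × (Fin 1 → ℝ) =>
        ((-(eval (0 : Fin n → ℝ) (hpoly gext A 0)) - lw2Obj d gext A t.1 t.2.1 t.2.2 : ℝ)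
          : EReal)) '' {t | Lw2Feas d gext A t.1 t.2.1 t.2.2}) := by
    simp only [fAgp, rhoA]
    exact aux_key _ _ _
  rw [keyA]
  simp only [sBound]
  apply le_antisymm
  · -- fAgp ≤ sBound
    apply sSup_le
    rintro x ⟨⟨z, w, mu⟩, hfeas, rfl⟩
    obtain ⟨hmu, hzc, hwc, hbud, hprodc, hwlb, hAc⟩ := hfeas
    set lam : Fin 1 → ℝ := fun _ => mu 0 - c with hlamdef
    have hlam0 : 0 ≤ lam 0 := by
      have h := hAc 1 (by decide)
      have hm0 : muExt mu 0 = 1 := rfl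
      have hm1 : muExt mu 1 = mu 0 := rfl
      rw [aux_sum_two, hA10, hA11, hm0, hm1] at h
      simp only [hlamdef]
      linarith
    have hHG : Hpoly gext A mu = polyG f ![g₁] lam := by
      rw [hHpoly, hgsum]
    set S : (Fin n →₀ ℕ) → ℝ := fun α =>
      ((f.coeff α / (d : ℝ)) ^ d / ∏ i, (z α i / (α i : ℝ)) ^ (α i)) ^ ((d : ℝ)⁻¹)
      with hSdef
    set z' : (Fin n →₀ ℕ) → Fin n → ℝ := fun α i =>
      if adeg α = d then S α * z α i else z α i with hz'def
    have hSfacts : ∀ α ∈ DelSet d f, adeg α = d →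
        0 < S α ∧ S α ≤ 1 ∧
          (S α) ^ d * ∏ i, (z α i / (α i : ℝ)) ^ (α i) = (f.coeff α / (d : ℝ)) ^ d := by
      intro α hα hαd
      have hzα := hzc α (by rw [hDT]; exact hα)
      have hP : 0 < ∏ i, (z α i / (α i : ℝ)) ^ (α i) := by
        apply Finset.prod_pos
        intro i _
        rcases Nat.eq_zero_or_pos (α i) with h | h
        · simp [h]
        · have hzi : 0 < z α i := by
            rcases (hzα i).1.lt_or_eq with h' | h'
            · exact h'
            · exact absurd ((hzα i).2.1 h'.symm) (by omega)
          exact pow_pos (div_pos hzi (by exact_mod_cast h)) _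
      have hfne : f.coeff α ≠ 0 := (hΔf α hα).1
      have hfd : 0 < (f.coeff α / (d : ℝ)) ^ d := hde.pow_pos (div_ne_zero hfne hdne)
      have hwα : |f.coeff α| ≤ w α := by
        rw [← hHpm mu α hα]; exact hwlb α (by rw [hDT]; exact hα)
      have hle : (f.coeff α / (d : ℝ)) ^ d ≤ ∏ i, (z α i / (α i : ℝ)) ^ (α i) := by
        calc (f.coeff α / (d : ℝ)) ^ d = (|f.coeff α| / (d : ℝ)) ^ d := by
              rw [div_pow, div_pow, hde.pow_abs]
          _ ≤ (w α / (d : ℝ)) ^ d := by gcongr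
          _ ≤ _ := hprodc α (by rw [hDT]; exact hα) hαd
      have hQ0 : 0 < (f.coeff α / (d : ℝ)) ^ d / ∏ i, (z α i / (α i : ℝ)) ^ (α i) :=
        div_pos hfd hP
      have hQ1 : (f.coeff α / (d : ℝ)) ^ d / ∏ i, (z α i / (α i : ℝ)) ^ (α i) ≤ 1 :=
        (div_le_one hP).2 hle
      refine ⟨Real.rpow_pos_of_pos hQ0 _, Real.rpow_le_one hQ0.le hQ1 (by positivity), ?_⟩
      have hpow : (S α) ^ d
          = (f.coeff α / (d : ℝ)) ^ d / ∏ i, (z α i / (α i : ℝ)) ^ (α i) := by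
        rw [hSdef]
        rw [← Real.rpow_natCast (_ ^ ((d : ℝ)⁻¹)) d, ← Real.rpow_mul hQ0.le,
          inv_mul_cancel₀ hdne, Real.rpow_one]
      rw [hpow, div_mul_cancel₀ _ hP.ne']
    have hfeasG : LwFeas d (polyG f ![g₁] lam) z' := by
      refine ⟨?_, ?_, ?_⟩
      · intro α hα i
        rw [hDelG] at hα
        have hz := hzc α (by rw [hDT]; exact hα) i
        by_cases hαd : adeg α = d
        · obtain ⟨hS0, _, _⟩ := hSfacts α hα hαd
          simp only [hz'def, if_pos hαd]
          refine ⟨mul_nonneg hS0.le hz.1, ?_⟩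
          rw [mul_eq_zero]
          constructor
          · rintro (h | h)
            · exact absurd h hS0.ne'
            · exact hz.2.1 h
          · intro h; exact Or.inr (hz.2.2 h)
        · simp only [hz'def, if_neg hαd]; exact hz
      · intro i
        have hle : ∀ α ∈ DelSet d (polyG f ![g₁] lam), z' α i ≤ z α i := by
          intro α hα
          rw [hDelG] at hα
          have hz := hzc α (by rw [hDT]; exact hα) i
          by_cases hαd : adeg α = d
          · obtain ⟨_, hS1, _⟩ := hSfacts α hα hαd
            simp only [hz'def, if_pos hαd]
            exact mul_le_of_le_one_left hz.1 hS1
          · simp only [hz'def, if_neg hαd]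
            exact le_rfl
        calc ∑ α ∈ DelSet d (polyG f ![g₁] lam), z' α i
            ≤ ∑ α ∈ DelSet d (polyG f ![g₁] lam), z α i := Finset.sum_le_sum hle
          _ ≤ (polyG f ![g₁] lam).coeff (Finsupp.single i d) := by
              rw [hDelG, ← hDT, ← hHG]
              exact hbud i
      · intro α hα hαd
        rw [hDelG] at hα
        obtain ⟨_, _, hval⟩ := hSfacts α hα hαd
        have hGα : (polyG f ![g₁] lam).coeff α =
            f.coeff α := hGcΔ lam α (hΔf α hα).2.1 (hΔf α hα).2.2
        rw [hGα]
        have : ∀ i, z' α i = S α * z α i := fun i => by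
          simp only [hz'def, if_pos hαd]
        calc ∏ i, (z' α i / (α i : ℝ)) ^ (α i)
            = ∏ i, (S α * z α i / (α i : ℝ)) ^ (α i) := by
              exact Finset.prod_congr rfl fun i _ => by rw [this i]
          _ = (S α) ^ (adeg α) * ∏ i, (z α i / (α i : ℝ)) ^ (α i) :=
              aux_scale_prod α (z α) (S α)
          _ = (f.coeff α / (d : ℝ)) ^ d := by rw [hαd]; exact hval
    have hobj : lwObj d (polyG f ![g₁] lam) z' ≤
        ∑ α ∈ pfilter (DelTot2 d gext) (fun α => adeg α < d),
          ((d : ℝ) - (adeg α : ℝ)) *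
            (((w α / (d : ℝ)) ^ d * ∏ i, ((α i : ℝ) / z α i) ^ (α i)) ^
              ((1 : ℝ) / ((d : ℝ) - (adeg α : ℝ)))) := by
      simp only [lwObj, hDelG, hDT]
      apply Finset.sum_le_sum
      intro α hα
      rw [aux_mem_pfilter] at hα
      obtain ⟨hαΔ, hαlt⟩ := hα
      have hz'eq : ∀ i, z' α i = z α i := fun i => by
        simp only [hz'def, if_neg (by omega : ¬ adeg α = d)]
      have hznn : ∀ i, 0 ≤ z α i := fun i => (hzc α (by rw [hDT]; exact hαΔ) i).1
      have hGα : (polyG f ![g₁] lam).coeff α = f.coeff α :=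
        hGcΔ lam α (hΔf α hαΔ).2.1 (hΔf α hαΔ).2.2
      have hdsub : (0 : ℝ) ≤ (d : ℝ) - (adeg α : ℝ) := by
        have : (adeg α : ℝ) ≤ (d : ℝ) := by exact_mod_cast (by omega : adeg α ≤ d)
        linarith
      have hpnn : 0 ≤ ∏ i, ((α i : ℝ) / z' α i) ^ (α i) := by
        apply Finset.prod_nonneg
        intro i _
        exact pow_nonneg (div_nonneg (Nat.cast_nonneg _) (by rw [hz'eq i]; exact hznn i)) _
      apply mul_le_mul_of_nonneg_left ?_ hdsub
      apply Real.rpow_le_rpow (mul_nonneg (hde.pow_nonneg _) hpnn) ?_ (by positivity)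
      have hpeq : ∏ i, ((α i : ℝ) / z' α i) ^ (α i) = ∏ i, ((α i : ℝ) / z α i) ^ (α i) :=
        Finset.prod_congr rfl fun i _ => by rw [hz'eq i]
      rw [hpeq, hGα]
      apply mul_le_mul_of_nonneg_right ?_ (hprodnn z α hznn)
      have hwα : |f.coeff α| ≤ w α := by
        rw [← hHpm mu α hαΔ]; exact hwlb α (by rw [hDT]; exact hαΔ)
      calc (f.coeff α / (d : ℝ)) ^ d = (|f.coeff α| / (d : ℝ)) ^ d := by
            rw [div_pow, div_pow, hde.pow_abs]
        _ ≤ (w α / (d : ℝ)) ^ d := by gcongr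
    have hval : -(eval (0 : Fin n → ℝ) (hpoly gext A 0)) - lw2Obj d gext A z w mu
        = eval (0 : Fin n → ℝ) (polyG f ![g₁] lam) -
          ∑ α ∈ pfilter (DelTot2 d gext) (fun α => adeg α < d),
            ((d : ℝ) - (adeg α : ℝ)) *
              (((w α / (d : ℝ)) ^ d * ∏ i, ((α i : ℝ) / z α i) ^ (α i)) ^
                ((1 : ℝ) / ((d : ℝ) - (adeg α : ℝ)))) := by
      simp only [lw2Obj, Fin.sum_univ_one, hsucc, hh1, max_eq_left hg0, he0, heG lam]
      simp only [hlamdef]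
      ring
    calc ((-(eval (0 : Fin n → ℝ) (hpoly gext A 0)) - lw2Obj d gext A z w mu : ℝ) : EReal)
        ≤ ((eval (0 : Fin n → ℝ) (polyG f ![g₁] lam)
            - lwObj d (polyG f ![g₁] lam) z' : ℝ) : EReal) := by
          rw [EReal.coe_le_coe_iff, hval]
          linarith
      _ ≤ sSup ((fun z => ((eval (0 : Fin n → ℝ) (polyG f ![g₁] lam)
              - lwObj d (polyG f ![g₁] lam) z : ℝ) : EReal)) ''
            {z | LwFeas d (polyG f ![g₁] lam) z}) := le_sSup ⟨z', hfeasG, rfl⟩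
      _ = lwGp d (polyG f ![g₁] lam) := (keyGp (polyG f ![g₁] lam)).symm
      _ ≤ _ := by exact le_sSup ⟨lam, fun j => by rw [Fin.eq_zero j]; exact hlam0, rfl⟩
  · -- sBound ≤ fAgp
    apply sSup_le
    rintro x ⟨lam, hlam, rfl⟩
    show lwGp d (polyG f ![g₁] lam) ≤ _
    rw [keyGp (polyG f ![g₁] lam)]
    apply sSup_le
    rintro x ⟨z, hz, rfl⟩
    obtain ⟨hz1, hz2, hz3⟩ := hz
    set mu : Fin 1 → ℝ := fun _ => lam 0 + c with hmudef
    set w : (Fin n →₀ ℕ) → ℝ := fun α => |f.coeff α| with hwdef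
    have hHG : Hpoly gext A mu = polyG f ![g₁] lam := by
      rw [hHpoly, hgsum]
      congr 2
      simp only [hmudef]
      ring
    have hfeas2 : Lw2Feas d gext A z w mu := by
      refine ⟨?_, ?_, ?_, ?_, ?_, ?_, ?_⟩
      · intro j
        have := hlam 0
        simp only [hmudef]
        linarith
      · intro α hα i
        rw [hDT] at hα
        exact hz1 α (by rw [hDelG lam]; exact hα) i
      · intro α hα
        rw [hDT] at hα
        exact abs_pos.2 (hΔf α hα).1
      · intro i
        rw [hDT, hHG, ← hDelG lam]
        exact hz2 i
      · intro α hα hαd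
        rw [hDT] at hα
        have h3 := hz3 α (by rw [hDelG lam]; exact hα) hαd
        rw [hGcΔ lam α (hΔf α hα).2.1 (hΔf α hα).2.2] at h3
        rw [h3]
        apply le_of_eq
        simp only [hwdef]
        rw [div_pow, div_pow, hde.pow_abs]
      · intro α hα
        rw [hDT] at hα
        exact (hHpm mu α hα).le
      · intro j hj
        have hj1 : j = 1 := by
          rcases Fin.eq_zero_or_eq_succ j with rfl | ⟨k, rfl⟩
          · exact absurd rfl hj
          · rw [Fin.eq_zero k]
            rfl
        subst hj1
        have hm0 : muExt mu 0 = 1 := rfl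
        have hm1 : muExt mu 1 = mu 0 := rfl
        rw [aux_sum_two, hA10, hA11, hm0, hm1]
        simp only [hmudef]
        have := hlam 0
        linarith
    have hobj2 : lw2Obj d gext A z w mu
        = mu 0 * eval (0 : Fin n → ℝ) g₁ + lwObj d (polyG f ![g₁] lam) z := by
      simp only [lw2Obj, lwObj, Fin.sum_univ_one, hsucc, hh1, max_eq_left hg0]
      congr 1
      rw [hDT, hDelG lam]
      apply Finset.sum_congr rfl
      intro α hα
      rw [aux_mem_pfilter] at hα
      have hGα : (polyG f ![g₁] lam).coeff α = f.coeff α :=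
        hGcΔ lam α (hΔf α hα.1).2.1 (hΔf α hα.1).2.2
      rw [hGα]
      congr 2
      simp only [hwdef]
      rw [div_pow, div_pow, hde.pow_abs]
    refine le_sSup ⟨(z, w, mu), hfeas2, ?_⟩
    show ((-(eval (0 : Fin n → ℝ) (hpoly gext A 0)) - lw2Obj d gext A z w mu : ℝ) : EReal) = _
    congr 1
    rw [hobj2, he0, heG lam]
    simp only [hmudef]
    ring
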